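/- Let K be a nonarchimedean local field, A = M_m(D) for a central division K-algebra D, and let 𝔇 be a maximal order in A. Then the conjugation stabilizer of 𝔇 in A* equals 𝔇* · D* · K* (where D* embeds diagonally), i.e., every x ∈ A* with x𝔇x^{-1} = 𝔇 lies in 𝔇* D* K*. -/

import Mathlib

set_option maxHeartbeats 1000000

/-- A nonarchimedean local field: a nontrivially normed field whose norm is
nonarchimedean and which is locally compact. -/
class NonarchLocalField (K : Type*) extends NontriviallyNormedField K where
  isNonarchimedean : IsNonarchimedean (norm : K → ℝ)
  locallyCompact : LocallyCompactSpace K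

/-- `s` is a full `O`-lattice in the finite-dimensional `K`-algebra (or vector space) `A`:
it is contained in a finitely generated `O`-submodule and spans `A` over `K`. -/
def IsFullLattice (K : Type*) [Field K] {A : Type*} [Ring A] [Algebra K A]
    (O : Subring K) (s : Set A) : Prop :=
  letI : Algebra O A := ((algebraMap K A).comp O.subtype).toAlgebra' (fun c x => Algebra.commutes (c : K) x)
  (∃ t : Finset A, s ⊆ (Submodule.span O (t : Set A) : Set A)) ∧
    Submodule.span K s = ⊤

/-- An `O`-order of maximal rank in `A`: a subring which is a full `O`-lattice
and is stable under multiplication by `O`. -/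
def IsOrder (K : Type*) [Field K] {A : Type*} [Ring A] [Algebra K A]
    (O : Subring K) (D : Subring A) : Prop :=
  IsFullLattice K O (D : Set A) ∧ ∀ c ∈ O, ∀ x ∈ D, algebraMap K A c * x ∈ D

/-- A maximal `O`-order in `A`. -/
def IsMaximalOrder (K : Type*) [Field K] {A : Type*} [Ring A] [Algebra K A]
    (O : Subring K) (D : Subring A) : Prop :=
  IsOrder K O D ∧ ∀ D' : Subring A, IsOrder K O D' → D ≤ D' → D = D'

/-- Let `K` be a nonarchimedean local field, `D` a central division algebra over `K`
with unique maximal order `O_D = {d : ‖d‖ ≤ 1}`, and `A = M_m(D)`. If `𝔇 = M_m(O_D)`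
is a maximal order of `A`, then every `x ∈ A*` with `x 𝔇 x⁻¹ = 𝔇` lies in
`𝔇* · D* · K*` (with `D*` and `K*` embedded as scalar matrices). -/
lemma aux_pow_le (c r : ℝ) (hr : 0 < r) (h : ∀ n : ℕ, c ^ n ≤ (n + 1) * r ^ n) : c ≤ r := by
  by_contra h'
  push_neg at h'
  have hc : 0 < c := lt_trans hr h'
  set t := c / r with ht
  have ht1 : 1 < t := (one_lt_div hr).2 h'
  have key : ∀ n : ℕ, t ^ n ≤ n + 1 := by
    intro n
    have := h n
    rw [div_pow]
    rw [div_le_iff₀ (by positivity)]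
    linarith [this]
  set e := t - 1 with he
  have he0 : 0 < e := by linarith
  obtain ⟨n, hn⟩ := exists_nat_gt (2 / e ^ 2)
  have hn0 : (0:ℝ) < n := lt_trans (by positivity) hn
  have h1 : 1 + (n:ℝ) * e ≤ t ^ n := by
    have := one_add_mul_le_pow (a := e) (by linarith) n
    simpa [he] using this
  have h2 : (1 + (n:ℝ) * e) ^ 2 ≤ (t ^ n) ^ 2 := by
    apply pow_le_pow_left₀ (by positivity) h1
  have h3 : t ^ (2 * n) ≤ 2 * n + 1 := by
    have := key (2 * n)
    push_cast at this
    linarith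
  have h4 : (t ^ n) ^ 2 = t ^ (2 * n) := by
    rw [← pow_mul, mul_comm]
  have h5 : 2 < (n:ℝ) * e ^ 2 := by
    rw [div_lt_iff₀ (by positivity)] at hn
    linarith
  nlinarith [sq_nonneg ((n:ℝ) * e)]

lemma nonarch_of_nat_le (D : Type*) [NormedDivisionRing D]
    (hnat : ∀ n : ℕ, ‖(n : D)‖ ≤ 1) : ∀ a b : D, ‖a + b‖ ≤ max ‖a‖ ‖b‖ := by
  have h1 : ∀ x : D, ‖1 + x‖ ≤ max 1 ‖x‖ := by
    intro x
    set r := max 1 ‖x‖ with hr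
    have hr1 : 1 ≤ r := le_max_left _ _
    have hr0 : 0 < r := lt_of_lt_of_le one_pos hr1
    have hxr : ‖x‖ ≤ r := le_max_right _ _
    apply aux_pow_le _ _ hr0
    intro n
    have hexp : (1 + x) ^ n = ∑ k ∈ Finset.range (n + 1), x ^ k * (n.choose k : D) := by
      have := Commute.add_pow (Commute.one_right x) n
      rw [add_comm]; simpa [mul_comm] using this
    calc ‖1 + x‖ ^ n = ‖(1 + x) ^ n‖ := (norm_pow _ _).symm
      _ = ‖∑ k ∈ Finset.range (n + 1), x ^ k * (n.choose k : D)‖ := by rw [hexp]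
      _ ≤ ∑ k ∈ Finset.range (n + 1), ‖x ^ k * (n.choose k : D)‖ := norm_sum_le _ _
      _ ≤ ∑ k ∈ Finset.range (n + 1), r ^ n := by
          apply Finset.sum_le_sum
          intro k hk
          rw [Finset.mem_range, Nat.lt_succ_iff] at hk
          rw [norm_mul, norm_pow]
          calc ‖x‖ ^ k * ‖(n.choose k : D)‖ ≤ r ^ k * 1 := by
                apply mul_le_mul (pow_le_pow_left₀ (norm_nonneg _) hxr _) (hnat _)
                  (norm_nonneg _) (by positivity)
            _ = r ^ k := mul_one _
            _ ≤ r ^ n := pow_le_pow_right₀ hr1 hk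
      _ = (n + 1) * r ^ n := by
          rw [Finset.sum_const, Finset.card_range]
          push_cast; ring
  intro a b
  rcases eq_or_ne a 0 with rfl | ha
  · simp
  · have : a + b = a * (1 + a⁻¹ * b) := by
      rw [mul_add, mul_one, ← mul_assoc, mul_inv_cancel₀ ha, one_mul]
    rw [this, norm_mul]
    calc ‖a‖ * ‖1 + a⁻¹ * b‖ ≤ ‖a‖ * max 1 ‖a⁻¹ * b‖ :=
          mul_le_mul_of_nonneg_left (h1 _) (norm_nonneg _)
      _ = max ‖a‖ ‖b‖ := by
          rw [mul_max_of_nonneg _ _ (norm_nonneg a), mul_one, norm_mul, norm_inv,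
            ← mul_assoc, mul_inv_cancel₀ (norm_ne_zero_iff.2 ha), one_mul]

theorem stabilizer_of_maximal_order_in_matrix_algebra
    (K : Type*) [NonarchLocalField K] (O : Subring K) (hO : ∀ x : K, x ∈ O ↔ ‖x‖ ≤ 1)
    (D : Type*) [NormedDivisionRing D] [NormedAlgebra K D] [FiniteDimensional K D]
    [Algebra.IsCentral K D]
    (hext : ∀ k : K, ‖algebraMap K D k‖ = ‖k‖)
    (m : ℕ) (𝔇 : Subring (Matrix (Fin m) (Fin m) D))
    (h𝔇max : IsMaximalOrder K O 𝔇)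
    (h𝔇 : (𝔇 : Set (Matrix (Fin m) (Fin m) D)) = {x | ∀ i j, ‖x i j‖ ≤ 1}) :
    ∀ x : (Matrix (Fin m) (Fin m) D)ˣ,
      (∀ a : Matrix (Fin m) (Fin m) D,
          a ∈ 𝔇 ↔ Units.val x * a * Units.val x⁻¹ ∈ 𝔇) →
      ∃ (u : (Matrix (Fin m) (Fin m) D)ˣ) (d : Dˣ) (k : Kˣ),
        Units.val u ∈ 𝔇 ∧
        Units.val u⁻¹ ∈ 𝔇 ∧
        Units.val x =
          Units.val u * Matrix.scalar (Fin m) (d : D) *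
            algebraMap K (Matrix (Fin m) (Fin m) D) (k : K) := by
  intro x hx
  have hmem : ∀ a : Matrix (Fin m) (Fin m) D, a ∈ 𝔇 ↔ ∀ i j, ‖a i j‖ ≤ 1 := by
    intro a
    rw [← SetLike.mem_coe, h𝔇]
    exact Iff.rfl
  have hnatK : ∀ n : ℕ, ‖((n : ℕ) : K)‖ ≤ 1 := by
    intro n
    induction n with
    | zero => simp
    | succ k ih =>
      push_cast
      refine le_trans (NonarchLocalField.isNonarchimedean _ _) ?_
      simp [ih]
  have hnatD : ∀ n : ℕ, ‖(n : D)‖ ≤ 1 := by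
    intro n
    rw [← map_natCast (algebraMap K D), hext]
    exact hnatK n
  have hna := nonarch_of_nat_le D hnatD
  rcases Nat.eq_zero_or_pos m with hm | hm
  · subst hm
    refine ⟨1, 1, 1, Subring.one_mem _, Subring.one_mem _, ?_⟩
    ext i j
    exact i.elim0
  · have hne : Nonempty (Fin m) := ⟨⟨0, hm⟩⟩
    set z : Fin m := ⟨0, hm⟩ with hz
    set A : Matrix (Fin m) (Fin m) D := Units.val x with hAdef
    set B : Matrix (Fin m) (Fin m) D := Units.val x⁻¹ with hBdef
    -- Key inequality (A)
    have hA : ∀ i j k l, ‖A k i‖ * ‖B j l‖ ≤ 1 := by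
      intro i j k l
      have hE : Matrix.single i j (1 : D) ∈ 𝔇 := by
        rw [hmem]
        intro k' l'
        simp only [Matrix.single, Matrix.of_apply]
        split_ifs <;> simp
      have hmemE := (hx _).1 hE
      rw [hmem] at hmemE
      have h2 := hmemE k l
      have hentry : (A * Matrix.single i j (1 : D) * B) k l = A k i * B j l := by
        rw [mul_assoc, Matrix.mul_apply, Finset.sum_eq_single i]
        · rw [Matrix.single_mul_apply_same, one_mul]
        · intro p _ hp
          rw [Matrix.single_mul_apply_of_ne (h := hp), mul_zero]
        · intro h
          exact absurd (Finset.mem_univ i) h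
      rw [hentry, norm_mul] at h2
      exact h2
    -- ultrametric instance to split the sum
    have hud : IsUltrametricDist D :=
      IsUltrametricDist.isUltrametricDist_of_forall_norm_add_le_max_norm hna
    have hsum : ∑ p : Fin m, A z p * B p z = 1 := by
      have h1 : A * B = 1 := x.mul_inv
      have := congrArg (fun M => M z z) h1
      simpa [Matrix.mul_apply, Matrix.one_apply] using this
    obtain ⟨i0, _, hle⟩ :=
      IsUltrametricDist.exists_norm_finset_sum_le_of_nonempty (M := D)
        (Finset.univ_nonempty (α := Fin m)) (fun p => A z p * B p z)
    rw [hsum] at hle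
    rw [norm_one, norm_mul] at hle
    have heq : ‖A z i0‖ * ‖B i0 z‖ = 1 := le_antisymm (hA i0 i0 z z) hle
    have hd0norm : 0 < ‖A z i0‖ := by
      rcases lt_or_eq_of_le (norm_nonneg (A z i0)) with h | h
      · exact h
      · exfalso; rw [← h] at heq; simp at heq
    have hBnorm : 0 < ‖B i0 z‖ := by
      rcases lt_or_eq_of_le (norm_nonneg (B i0 z)) with h | h
      · exact h
      · exfalso; rw [← h] at heq; simp at heq
    set d0 : D := A z i0 with hd0def
    have hd0 : d0 ≠ 0 := norm_pos_iff.mp hd0norm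
    set dU : Dˣ := Units.mk0 d0 hd0 with hdU
    set sU : (Matrix (Fin m) (Fin m) D)ˣ :=
      Units.map (Matrix.scalar (Fin m)).toMonoidHom dU with hsU
    have hsUval : Units.val sU = Matrix.scalar (Fin m) d0 := by
      rw [hsU, Units.coe_map]; rfl
    have hsUinv : Units.val sU⁻¹ = Matrix.scalar (Fin m) d0⁻¹ := by
      rw [hsU, ← map_inv, Units.coe_map]
      show Matrix.scalar (Fin m) ((dU⁻¹ : Dˣ) : D) = _
      rw [Units.val_inv_eq_inv_val, hdU, Units.val_mk0]
    refine ⟨x * sU⁻¹, dU, 1, ?_, ?_, ?_⟩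
    · -- x * sU⁻¹ ∈ 𝔇
      rw [hmem]
      intro k l
      have : (Units.val (x * sU⁻¹)) k l = A k l * d0⁻¹ := by
        rw [Units.val_mul, hsUinv, Matrix.scalar_apply, Matrix.mul_diagonal]
      rw [this, norm_mul, norm_inv]
      have h2 : ‖A k l‖ ≤ ‖d0‖ := by
        have h1 : ‖A k l‖ * ‖B i0 z‖ ≤ 1 := hA l i0 k z
        rw [← heq] at h1
        exact le_of_mul_le_mul_right h1 hBnorm
      calc ‖A k l‖ * ‖d0‖⁻¹ ≤ ‖d0‖ * ‖d0‖⁻¹ :=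
            mul_le_mul_of_nonneg_right h2 (by positivity)
        _ = 1 := mul_inv_cancel₀ (ne_of_gt hd0norm)
    · -- (x * sU⁻¹)⁻¹ ∈ 𝔇
      rw [hmem]
      intro k l
      have : (Units.val (x * sU⁻¹)⁻¹) k l = d0 * B k l := by
        rw [mul_inv_rev, inv_inv, Units.val_mul, hsUval, Matrix.scalar_apply,
          Matrix.diagonal_mul]
      rw [this, norm_mul]
      exact hA i0 k z l
    · -- the factorization
      have hdUv : (dU : D) = d0 := rfl
      simp only [Units.val_one, map_one, mul_one]
      rw [hdUv, ← hsUval, ← Units.val_mul, mul_assoc, inv_mul_cancel, mul_one]
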